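/- Let α = [0;1+d₁,d₂,d₃,…] be irrational with d₁ ≥ 1. Then the characteristic Sturmian word c_α admits the decomposition c_α = ∏_{j=−1}^{∞} (v_{2j} w_{2j+1})^{d_{2j+3}} = ∏_{j=−1}^{∞} v_j into (adjoining) singular words. -/
import Mathlib


/-- The two-letter alphabet 𝒜 = {a, b}. -/
inductive AB : Type
  | a : AB
  | b : AB
deriving DecidableEq, Repr

/-- Apply a morphism (determined by its images on the letters) to a finite word. -/
def applyM (g : AB → List AB) (w : List AB) : List AB := w.flatMap g

/-- The exchange morphism E : a ↦ b, b ↦ a. -/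
def Em : AB → List AB
  | AB.a => [AB.b]
  | AB.b => [AB.a]

/-- The morphism φ : a ↦ ab, b ↦ a. -/
def phim : AB → List AB
  | AB.a => [AB.a, AB.b]
  | AB.b => [AB.a]

/-- Composition of morphisms: `compM g h` applies `h` first, then `g`. -/
def compM (g h : AB → List AB) : AB → List AB := fun c => applyM g (h c)

/-- Powers of a morphism. -/
def mpow (g : AB → List AB) : ℕ → AB → List AB
  | 0 => fun c => [c]
  | n + 1 => compM g (mpow g n)

/-- A morphism is standard iff it is a composition of E and φ (in any number and order). -/
inductive IsStandard : (AB → List AB) → Prop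
  | id : IsStandard (fun c => [c])
  | compE {ψ : AB → List AB} : IsStandard ψ → IsStandard (compM ψ Em)
  | compPhi {ψ : AB → List AB} : IsStandard ψ → IsStandard (compM ψ phim)

/-- `IsRightConj ψ ξ k` : ξ is the k-th right conjugate of ψ, i.e. there is a word u
of length k with ψ(w)u = uξ(w) for all finite words w. -/
def IsRightConj (ψ ξ : AB → List AB) (k : ℕ) : Prop :=
  ∃ u : List AB, u.length = k ∧ ∀ w : List AB, applyM ψ w ++ u = u ++ applyM ξ w

/-- w^k (power of a finite word under concatenation). -/
def lpow (w : List AB) : ℕ → List AB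
  | 0 => []
  | k + 1 => w ++ lpow w k

/-- Standard sequence associated with a directive sequence (d₁, d₂, …) (here `d`
is indexed so that `d i` is dᵢ for i ≥ 1): `sseq d 0 = s₋₁ = b`, `sseq d (n+1) = sₙ`,
with s₀ = a and sₙ = sₙ₋₁^{dₙ} sₙ₋₂. -/
def sseq (d : ℕ → ℕ) : ℕ → List AB
  | 0 => [AB.b]
  | 1 => [AB.a]
  | n + 2 => lpow (sseq d (n + 1)) (d (n + 1)) ++ sseq d n

/-- Convergent denominators: `qseq d n` = qₙ = |sₙ| (q₀ = 1, q₁ = 1 + d₁,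
qₙ = dₙqₙ₋₁ + qₙ₋₂). -/
def qseq (d : ℕ → ℕ) : ℕ → ℕ
  | 0 => 1
  | 1 => 1 + d 1
  | n + 2 => d (n + 2) * qseq d (n + 1) + qseq d n

/-- `PrefInf u x` : the finite word u is a prefix of the infinite word x. -/
def PrefInf (u : List AB) (x : ℕ → AB) : Prop :=
  ∀ i, i < u.length → u.getD i AB.a = x i

/-- Image of an infinite word under a (non-erasing) morphism, letter by letter. -/
def applyInf (g : AB → List AB) (x : ℕ → AB) : ℕ → AB :=
  fun i => (applyM g ((List.range (i + 1)).map x)).getD i AB.a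

/-- `IsProdInf u x` : the infinite word x is the infinite product u 0 · u 1 · u 2 ⋯,
i.e. every finite partial product is a prefix of x. -/
def IsProdInf (u : ℕ → List AB) (x : ℕ → AB) : Prop :=
  ∀ n, PrefInf (((List.range n).map u).flatten) x

/-- Adjoining singular words: `vword d k` is the adjoining singular word v_{k-1}
(so `vword d 0 = v₋₁`), where vₙ = a·sₙ₊₁^{d_{n+2}−1}sₙ·b⁻¹ for n odd and
vₙ = b·sₙ₊₁^{d_{n+2}−1}sₙ·a⁻¹ for n even. -/
def vword (d : ℕ → ℕ) (k : ℕ) : List AB :=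
  (if k % 2 = 0 then AB.a else AB.b) ::
    (lpow (sseq d (k + 1)) (d (k + 1) - 1) ++ sseq d k).dropLast

/-- Singular words: `wword d k` is the singular word w_{k-2}
(w₋₂ = ε, w₋₁ = a, w₀ = b, and wₙ = a·sₙ·b⁻¹ for n ≥ 1 odd, wₙ = b·sₙ·a⁻¹ for n even). -/
def wword (d : ℕ → ℕ) : ℕ → List AB
  | 0 => []
  | 1 => [AB.a]
  | 2 => [AB.b]
  | k + 3 =>
      (if (k + 1) % 2 = 1 then AB.a else AB.b) :: (sseq d (k + 2)).dropLast

/-- The standard morphism σ associated with a type (i) Sturm number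
α = [0;1+d₁,\overline{d₂,…,dₙ}] : σ(a) = sₙ₋₁, σ(b) = sₙ₋₁^{dₙ−d₁} sₙ₋₂. -/
def sigmaGen (d : ℕ → ℕ) (n : ℕ) : AB → List AB
  | AB.a => sseq d n
  | AB.b => lpow (sseq d n) (d n - d 1) ++ sseq d (n - 1)

/-- The directive sequence of α = [0;2,\overline{r}] : d₁ = 1, dᵢ = r for i ≥ 2. -/
def dseq (r : ℕ) : ℕ → ℕ := fun i => if i ≤ 1 then 1 else r

/-- The directive sequence of 1 − α = [0;1,d₁,\overline{d₂,…,dₙ}] obtained from that of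
α = [0;1+d₁,\overline{d₂,…,dₙ}] : ê₁ = 0 and êᵢ = dᵢ₋₁ for i ≥ 2. -/
def dhat (d : ℕ → ℕ) : ℕ → ℕ := fun i => if i ≤ 1 then 0 else d (i - 1)

/-- `Generates ψ c x` : ψ is prolongable on the letter c and x = ψ^ω(c), i.e. every
ψ^m(c) is a prefix of x. -/
def Generates (ψ : AB → List AB) (c : AB) (x : ℕ → AB) : Prop :=
  (∃ w : List AB, w ≠ [] ∧ ψ c = c :: w) ∧ ∀ m, PrefInf (mpow ψ m c) x

/-- Fibonacci numbers, shifted: `fibw k = F_{k-1}`, so fibw 0 = F₋₁ = 1,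
fibw 1 = F₀ = 1, Fₙ = Fₙ₋₁ + Fₙ₋₂. -/
def fibw : ℕ → ℕ
  | 0 => 1
  | 1 => 1
  | n + 2 => fibw (n + 1) + fibw n

/-- `HasCF γ a` : γ has continued fraction expansion [0; a 1, a 2, a 3, …]. -/
def HasCF (γ : ℝ) (a : ℕ → ℕ) : Prop :=
  ∃ x : ℕ → ℝ, x 0 = γ ∧ (∀ i, 0 < x i ∧ x i < 1) ∧
    ∀ i, 1 / x i = (a (i + 1) : ℝ) + x (i + 1)

/-- γ has a continued fraction expansion of type (i):
γ = [0;1+d₁,\overline{d₂,…,dₙ}] < 1/2 with dₙ ≥ d₁ ≥ 1. -/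
def CFTypeI (γ : ℝ) : Prop :=
  ∃ a : ℕ → ℕ, HasCF γ a ∧ γ < 1 / 2 ∧
    ∃ n : ℕ, 2 ≤ n ∧ ∃ d : ℕ → ℕ,
      (∀ i, 1 ≤ i → 1 ≤ d i) ∧ a 1 = 1 + d 1 ∧ (∀ i, 2 ≤ i → a i = d i) ∧
      (∀ i, 2 ≤ i → d (i + (n - 1)) = d i) ∧ d 1 ≤ d n

/-- γ has a continued fraction expansion of type (ii):
γ = [0;1,d₁,\overline{d₂,…,dₙ}] > 1/2 with dₙ ≥ d₁. -/
def CFTypeII (γ : ℝ) : Prop :=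
  ∃ a : ℕ → ℕ, HasCF γ a ∧ 1 / 2 < γ ∧
    ∃ n : ℕ, 2 ≤ n ∧ ∃ d : ℕ → ℕ,
      (∀ i, 1 ≤ i → 1 ≤ d i) ∧ a 1 = 1 ∧ (∀ i, 2 ≤ i → a i = d (i - 1)) ∧
      (∀ i, 2 ≤ i → d (i + (n - 1)) = d i) ∧ d 1 ≤ d n

/-- A Sturm number: an irrational γ ∈ (0,1) whose continued fraction expansion is of
type (i) or type (ii). -/
def IsSturmNumber (γ : ℝ) : Prop :=
  Irrational γ ∧ 0 < γ ∧ γ < 1 ∧ (CFTypeI γ ∨ CFTypeII γ)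

/-- The last letter of `sseq d k`. -/
def lst (k : ℕ) : AB := if k % 2 = 0 then AB.b else AB.a

lemma sseq_last (d : ℕ → ℕ) : ∀ k, ∃ u, sseq d k = u ++ [lst k]
  | 0 => ⟨[], by simp [sseq, lst]⟩
  | 1 => ⟨[], by simp [sseq, lst]⟩
  | k + 2 => by
    obtain ⟨u, hu⟩ := sseq_last d k
    refine ⟨lpow (sseq d (k + 1)) (d (k + 1)) ++ u, ?_⟩
    have h2 : lst (k + 2) = lst k := by simp [lst, Nat.add_mod_right]
    show lpow (sseq d (k + 1)) (d (k + 1)) ++ sseq d k = _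
    rw [hu, h2, List.append_assoc]

lemma dropLast_append_concat (x u : List AB) (c : AB) :
    (x ++ (u ++ [c])).dropLast = x ++ u := by
  rw [← List.append_assoc, List.dropLast_concat]

lemma step_v (d : ℕ → ℕ) (hd : ∀ i, 1 ≤ i → 1 ≤ d i) (n : ℕ) :
    (sseq d (n + 1)).dropLast ++ vword d n = (sseq d (n + 2)).dropLast := by
  obtain ⟨u1, h1⟩ := sseq_last d (n + 1)
  obtain ⟨u0, h0⟩ := sseq_last d n
  have he : d (n + 1) = (d (n + 1) - 1) + 1 := by
    have := hd (n + 1) (by omega); omega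
  have hh : (if n % 2 = 0 then AB.a else AB.b) = lst (n + 1) := by
    rcases Nat.mod_two_eq_zero_or_one n with h | h
    · have h1' : (n + 1) % 2 = 1 := by omega
      simp [lst, h, h1']
    · have h1' : (n + 1) % 2 = 0 := by omega
      simp [lst, h, h1']
  show (sseq d (n + 1)).dropLast ++
      ((if n % 2 = 0 then AB.a else AB.b) ::
        (lpow (sseq d (n + 1)) (d (n + 1) - 1) ++ sseq d n).dropLast) = _
  rw [hh, h0, dropLast_append_concat]
  have hdrop1 : (sseq d (n + 1)).dropLast = u1 := by rw [h1, List.dropLast_concat]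
  have hs2 : sseq d (n + 2) = lpow (sseq d (n + 1)) (d (n + 1)) ++ sseq d n := rfl
  rw [hdrop1, hs2, h0, dropLast_append_concat]
  have : u1 ++ lst (n + 1) :: (lpow (sseq d (n + 1)) (d (n + 1) - 1) ++ u0)
      = (u1 ++ [lst (n + 1)]) ++ lpow (sseq d (n + 1)) (d (n + 1) - 1) ++ u0 := by
    simp
  rw [this, ← h1]
  conv_rhs => rw [he]
  show _ = (sseq d (n + 1) ++ lpow (sseq d (n + 1)) (d (n + 1) - 1)) ++ u0
  simp

lemma vprod (d : ℕ → ℕ) (hd : ∀ i, 1 ≤ i → 1 ≤ d i) (n : ℕ) :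
    ((List.range n).map (vword d)).flatten = (sseq d (n + 1)).dropLast := by
  induction n with
  | zero => simp [sseq]
  | succ m ih =>
      rw [List.range_succ, List.map_append, List.flatten_append]
      simp only [List.map_cons, List.map_nil, List.flatten_cons, List.flatten_nil,
        List.append_nil]
      rw [ih, step_v d hd m]

lemma lpow_conj (c : AB) (X u : List AB) :
    ∀ m, lpow (c :: (X ++ u)) (m + 1) = c :: (X ++ (lpow (u ++ c :: X) m ++ u))
  | 0 => by simp [lpow]
  | m + 1 => by
    show (c :: (X ++ u)) ++ lpow (c :: (X ++ u)) (m + 1) = _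
    rw [lpow_conj c X u m]
    show _ = c :: (X ++ ((u ++ c :: X) ++ lpow (u ++ c :: X) m ++ u))
    simp

lemma term_eq (d : ℕ → ℕ) (hd : ∀ i, 1 ≤ i → 1 ≤ d i) (k : ℕ) :
    lpow (vword d (k + 1) ++ wword d (k + 3)) (d (k + 3))
      = vword d (k + 1) ++ vword d (k + 2) := by
  obtain ⟨uS, hS⟩ := sseq_last d (k + 2)
  obtain ⟨uT, hT⟩ := sseq_last d (k + 1)
  have he : d (k + 2) = (d (k + 2) - 1) + 1 := by have := hd (k + 2) (by omega); omega
  have hf : d (k + 3) = (d (k + 3) - 1) + 1 := by have := hd (k + 3) (by omega); omega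
  have hpar : ((k + 1) % 2 = 0 ∧ (k + 2) % 2 = 1 ∧ k % 2 = 1) ∨
      ((k + 1) % 2 = 1 ∧ (k + 2) % 2 = 0 ∧ k % 2 = 0) := by omega
  -- heads
  have hA : (if (k + 1) % 2 = 0 then AB.a else AB.b) = lst (k + 2) := by
    rcases hpar with ⟨h1, h2, h3⟩ | ⟨h1, h2, h3⟩ <;> simp [lst, h1, h2]
  have hB : (if (k + 1) % 2 = 1 then AB.a else AB.b) = lst (k + 1) := by
    rcases hpar with ⟨h1, h2, h3⟩ | ⟨h1, h2, h3⟩ <;> simp [lst, h1, h2, h3]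
  have hB' : (if (k + 2) % 2 = 0 then AB.a else AB.b) = lst (k + 1) := by
    rcases hpar with ⟨h1, h2, h3⟩ | ⟨h1, h2, h3⟩ <;> simp [lst, h1, h2, h3]
  have hvk1 : vword d (k + 1) =
      lst (k + 2) :: (lpow (sseq d (k + 2)) (d (k + 2) - 1) ++ uT) := by
    show (if (k + 1) % 2 = 0 then AB.a else AB.b) ::
        (lpow (sseq d (k + 2)) (d (k + 2) - 1) ++ sseq d (k + 1)).dropLast = _
    rw [hA, hT, dropLast_append_concat]
  have hwk3 : wword d (k + 3) = lst (k + 1) :: uS := by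
    show (if (k + 1) % 2 = 1 then AB.a else AB.b) :: (sseq d (k + 2)).dropLast = _
    rw [hB, hS, List.dropLast_concat]
  have hvk2 : vword d (k + 2) =
      lst (k + 1) :: (lpow (sseq d (k + 3)) (d (k + 3) - 1) ++ uS) := by
    show (if (k + 2) % 2 = 0 then AB.a else AB.b) ::
        (lpow (sseq d (k + 3)) (d (k + 3) - 1) ++ sseq d (k + 2)).dropLast = _
    rw [hB', hS, dropLast_append_concat]
  set X : List AB := lpow (sseq d (k + 2)) (d (k + 2) - 1) ++ sseq d (k + 1) with hX
  have hAB : vword d (k + 1) ++ wword d (k + 3) = lst (k + 2) :: (X ++ uS) := by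
    rw [hvk1, hwk3, hX, hT]
    simp
  have hQ : uS ++ lst (k + 2) :: X = sseq d (k + 3) := by
    have h1 : uS ++ lst (k + 2) :: X = (uS ++ [lst (k + 2)]) ++ X := by simp
    rw [h1, ← hS, hX]
    show _ = lpow (sseq d (k + 2)) (d (k + 2)) ++ sseq d (k + 1)
    conv_rhs => rw [he]
    show _ = (sseq d (k + 2) ++ lpow (sseq d (k + 2)) (d (k + 2) - 1)) ++ sseq d (k + 1)
    simp
  rw [hAB]
  conv_lhs => rw [hf]
  rw [lpow_conj, hQ, hvk1, hvk2, hX]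
  simp [hT]

lemma vword_zero (d : ℕ → ℕ) (hd : ∀ i, 1 ≤ i → 1 ≤ d i) :
    vword d 0 = lpow [AB.a] (d 1) := by
  have h1 : d 1 = (d 1 - 1) + 1 := by have := hd 1 (by omega); omega
  show AB.a :: (lpow (sseq d 1) (d 1 - 1) ++ sseq d 0).dropLast = _
  have hs1 : sseq d 1 = [AB.a] := rfl
  have hs0 : sseq d 0 = [AB.b] := rfl
  rw [hs1, hs0, List.dropLast_concat]
  conv_rhs => rw [h1]
  rfl

lemma wprod (d : ℕ → ℕ) (hd : ∀ i, 1 ≤ i → 1 ≤ d i) (n : ℕ) :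
    ((List.range n).map (fun i =>
        lpow ((if i = 0 then [] else vword d (2 * i - 1)) ++ wword d (2 * i + 1))
          (d (2 * i + 1)))).flatten = (sseq d (2 * n)).dropLast := by
  induction n with
  | zero => simp [sseq]
  | succ m ih =>
      rw [List.range_succ, List.map_append, List.flatten_append]
      simp only [List.map_cons, List.map_nil, List.flatten_cons, List.flatten_nil,
        List.append_nil]
      rw [ih]
      cases m with
      | zero =>
          have hterm : ((if (0:ℕ) = 0 then ([]:List AB) else vword d (2 * 0 - 1)) ++
              wword d (2 * 0 + 1)) = [AB.a] := rfl
          rw [hterm]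
          norm_num
          rw [← vword_zero d hd]
          have h0 : (sseq d 0).dropLast = (sseq d 1).dropLast := rfl
          rw [h0]
          exact step_v d hd 0
      | succ j =>
          have h1 : 2 * (j + 1) - 1 = (2 * j + 1) - 1 + 1 := by omega
          have h2 : 2 * (j + 1) + 1 = ((2 * j + 1) - 1) + 3 := by omega
          have hterm : lpow ((if j + 1 = 0 then [] else vword d (2 * (j + 1) - 1)) ++
              wword d (2 * (j + 1) + 1)) (d (2 * (j + 1) + 1))
              = vword d (2 * j + 1) ++ vword d (2 * j + 2) := by
            rw [if_neg (by omega), h1, h2]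
            have := term_eq d hd (2 * j + 1 - 1)
            rw [this]
            congr 2 <;> omega
          rw [hterm, ← List.append_assoc]
          have e1 : 2 * (j + 1) = (2 * j + 1) + 1 := by omega
          have e2 : 2 * (j + 2) = (2 * j + 2) + 2 := by omega
          rw [e1, step_v d hd (2 * j + 1)]
          have e3 : (2 * j + 1) + 2 = (2 * j + 2) + 1 := by omega
          rw [e3, step_v d hd (2 * j + 2), e2]

lemma prefInf_of_append (u t : List AB) (x : ℕ → AB) (H : PrefInf (u ++ t) x) :
    PrefInf u x := by
  intro i hi
  have h1 : i < (u ++ t).length := by simp; omega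
  have h2 := H i h1
  rwa [List.getD_append _ _ _ _ hi] at h2

/-- For α = [0;1+d₁,d₂,d₃,…] irrational with d₁ ≥ 1,
c_α = ∏_{j=−1}^∞ (v_{2j} w_{2j+1})^{d_{2j+3}} = ∏_{j=−1}^∞ v_j.
(Term i of the first product corresponds to j = i − 1, with v_{2j} = v_{2i−2} =
`vword d (2i−1)` for i ≥ 1 and v₋₂ = ε for i = 0, w_{2j+1} = w_{2i−1} =
`wword d (2i+1)`, and d_{2j+3} = d (2i+1); term i of the second product is
v_{i−1} = `vword d i`.) -/
theorem statement15 (d : ℕ → ℕ) (hd : ∀ i, 1 ≤ i → 1 ≤ d i)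
    (c : ℕ → AB) (hc : ∀ k, PrefInf (sseq d (k + 1)) c) :
    IsProdInf
      (fun i =>
        lpow ((if i = 0 then [] else vword d (2 * i - 1)) ++ wword d (2 * i + 1))
          (d (2 * i + 1)))
      c ∧
    IsProdInf (fun i => vword d i) c := by
  constructor
  · intro n
    rw [wprod d hd n]
    cases n with
    | zero => intro i hi; simp [sseq] at hi
    | succ m =>
        have e : 2 * (m + 1) = (2 * m + 1) + 1 := by omega
        rw [e]
        obtain ⟨u, hu⟩ := sseq_last d (2 * m + 1 + 1)
        have := hc (2 * m + 1)
        rw [hu] at this ⊢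
        rw [List.dropLast_concat]
        exact prefInf_of_append _ _ _ this
  · intro n
    rw [vprod d hd n]
    obtain ⟨u, hu⟩ := sseq_last d (n + 1)
    have := hc n
    rw [hu] at this ⊢
    rw [List.dropLast_concat]
    exact prefInf_of_append _ _ _ this
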